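/- arXiv:1805.09246 — 2 statements merged into one kernel-verified Lean document; each statement's English description precedes it below -/
import Mathlib

section
/- With the age-counter semantics, a cell value less than k holds if and only if some element hashed to that cell within the last k time slices. Hence the sliding weight |SRE|^k (number of cells with value < k) of the sliding estimator at the end of slice t + k − 1 equals the weight (number of set bits) that a discrete-window estimator would have after processing exactly the elements of slices t through t + k − 1. -/
/-- Age of a cell at the end of slice `T`, given the set `E` of slice times at which some
element hashed to this cell: `T − max E` if `E` is nonempty, `⊤` otherwise. -/
def cellVal (T : ℕ) (E : Finset ℕ) : ℕ∞ :=
  if h : E.Nonempty then ((T - E.max' h : ℕ) : ℕ∞) else ⊤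

/-- A cell value is `< k` at the end of slice `t+k−1` iff some element hashed to it during
slices `t,…,t+k−1`; hence the sliding weight `|SRE|^k` equals the discrete-window weight
over window `W(t,k)`. -/
theorem stmt18 (η k t : ℕ) (hk : 1 ≤ k) (E : Fin η → Finset ℕ)
    (hE : ∀ j, ∀ s ∈ E j, s ≤ t + k - 1) :
    (∀ j, cellVal (t + k - 1) (E j) < (k : ℕ∞) ↔ ∃ s ∈ E j, t ≤ s ∧ s ≤ t + k - 1) ∧
    (Finset.univ.filter fun j => cellVal (t + k - 1) (E j) < (k : ℕ∞)).card
      = (Finset.univ.filter fun j : Fin η => ∃ s ∈ E j, t ≤ s ∧ s ≤ t + k - 1).card := by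
  have main : ∀ j, cellVal (t + k - 1) (E j) < (k : ℕ∞) ↔
      ∃ s ∈ E j, t ≤ s ∧ s ≤ t + k - 1 := by
    intro j
    unfold cellVal
    by_cases h : (E j).Nonempty
    · simp only [dif_pos h]
      rw [show ((k : ℕ∞)) = ((k : ℕ) : ℕ∞) from rfl, Nat.cast_lt]
      constructor
      · intro hlt
        refine ⟨(E j).max' h, (E j).max'_mem h, ?_, hE j _ ((E j).max'_mem h)⟩
        omega
      · rintro ⟨s, hs, hts, hst⟩
        have hmax : s ≤ (E j).max' h := (E j).le_max' s hs
        have hmle : (E j).max' h ≤ t + k - 1 := hE j _ ((E j).max'_mem h)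
        omega
    · simp only [dif_neg h]
      constructor
      · intro hlt; exact absurd hlt (by simp)
      · rintro ⟨s, hs, _⟩; exact absurd ⟨s, hs⟩ h
  refine ⟨main, ?_⟩
  congr 1
  ext j
  simp [main j]
end

section
/- Given independent sampling with probability p = 1/2^τ of N elements, followed by throwing each sampled element uniformly into η boxes, the probability that at least n boxes are non-empty is Σ_{η₁=n}^{η} Σ_{α=η₁}^{N} C(N,α) p^α (1−p)^{N−α} · C(η,η₁) FN(α,η₁)/η^α, and this probability is monotonically non-decreasing in N. -/
/-- `FN α η₁` is the number of surjections from an `α`-element set onto an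
`η₁`-element set. -/
def FN (α η₁ : ℕ) : ℕ := Fintype.card {f : Fin α → Fin η₁ // Function.Surjective f}

namespace Stmt19Aux
open Finset Function

lemma card_surj_subtype {γ δ : Type*} [Fintype γ] [Fintype δ] [DecidableEq γ] [DecidableEq δ]
    (S : Finset γ) (T : Finset δ) :
    Fintype.card {g : S → T // Surjective g} = FN S.card T.card := by
  rw [FN]
  refine Fintype.card_congr (Equiv.subtypeEquiv
    (Equiv.arrowCongr S.equivFin T.equivFin) (fun g => ?_))
  simp [Equiv.arrowCongr, Equiv.comp_surjective, Equiv.surjective_comp]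

lemma FN_eq_zero {α η₁ : ℕ} (h : α < η₁) : FN α η₁ = 0 := by
  rw [FN, Fintype.card_eq_zero_iff]
  refine ⟨fun ⟨g, hg⟩ => ?_⟩
  have := Fintype.card_le_of_surjective g hg
  simp at this; omega

lemma sum_finset_card {M : Type*} [AddCommMonoid M] {N : ℕ} (g : ℕ → M) :
    ∑ S : Finset (Fin N), g S.card = ∑ α ∈ range (N + 1), (N.choose α) • g α := by
  rw [← Finset.powerset_univ, Finset.sum_powerset]
  simp only [Finset.card_univ, Fintype.card_fin]
  refine Finset.sum_congr rfl fun α _ => ?_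
  rw [Finset.sum_congr rfl (fun S hS => by rw [(Finset.mem_powersetCard.1 hS).2]),
    Finset.sum_const, Finset.card_powersetCard, Finset.card_univ, Fintype.card_fin]

lemma cardFinNeZero (τ : ℕ) : Fintype.card {x : Fin (2 ^ τ) // x.val ≠ 0} = 2 ^ τ - 1 := by
  rw [Fintype.card_subtype_compl]
  congr 1
  · simp
  · rw [Fintype.card_eq_one_iff]
    exact ⟨⟨⟨0, (by positivity)⟩, rfl⟩, fun y => Subtype.ext (Fin.ext y.2)⟩

def fiberEquiv (τ η N : ℕ) (S : Finset (Fin N)) (T : Finset (Fin η)) :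
    {f : Fin N → Fin (2 ^ τ) × Fin η //
        (Finset.univ.filter fun i => (f i).1.val = 0) = S ∧
        ((Finset.univ.filter fun i => (f i).1.val = 0)).image (fun i => (f i).2) = T}
    ≃ {g : S → T // Surjective g} ×
      ((Sᶜ : Finset (Fin N)) → {x : Fin (2 ^ τ) // x.val ≠ 0} × Fin η) where
  toFun f :=
    ⟨⟨fun i => ⟨(f.1 i).2, by
        obtain ⟨F, hS, hT⟩ := f
        have hmS : ∀ j, j ∈ S ↔ (F j).1.val = 0 := fun j => by simp [← hS]
        have hmT : ∀ t, t ∈ T ↔ ∃ j, (F j).1.val = 0 ∧ (F j).2 = t := fun t => by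
          simp [← hT]
        exact (hmT _).2 ⟨↑i, (hmS _).1 i.2, rfl⟩⟩, by
      obtain ⟨F, hS, hT⟩ := f
      have hmS : ∀ j, j ∈ S ↔ (F j).1.val = 0 := fun j => by simp [← hS]
      have hmT : ∀ t, t ∈ T ↔ ∃ j, (F j).1.val = 0 ∧ (F j).2 = t := fun t => by
        simp [← hT]
      rintro t
      obtain ⟨j, hj0, hjt⟩ := (hmT _).1 t.2
      exact ⟨⟨j, (hmS j).2 hj0⟩, Subtype.ext hjt⟩⟩,
    fun i => ⟨⟨(f.1 i).1, by
        obtain ⟨F, hS, hT⟩ := f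
        have hmS : ∀ j, j ∈ S ↔ (F j).1.val = 0 := fun j => by simp [← hS]
        exact fun h0 => Finset.mem_compl.1 i.2 ((hmS _).2 h0)⟩, (f.1 i).2⟩⟩
  invFun gh :=
    ⟨fun i => if hi : i ∈ S then (⟨0, (by positivity)⟩, (gh.1.1 ⟨i, hi⟩ : T))
      else ((gh.2 ⟨i, Finset.mem_compl.2 hi⟩).1.1, (gh.2 ⟨i, Finset.mem_compl.2 hi⟩).2), by
    constructor
    · ext i
      simp only [Finset.mem_filter, Finset.mem_univ, true_and]
      by_cases hi : i ∈ S
      · simp [hi]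
      · simp [hi, (gh.2 ⟨i, Finset.mem_compl.2 hi⟩).1.2]
    · ext t
      simp only [Finset.mem_image, Finset.mem_filter, Finset.mem_univ, true_and]
      constructor
      · rintro ⟨j, hj0, hjt⟩
        by_cases hj : j ∈ S
        · rw [dif_pos hj] at hjt
          exact hjt ▸ (gh.1.1 ⟨j, hj⟩).2
        · rw [dif_neg hj] at hj0
          exact absurd hj0 (gh.2 ⟨j, Finset.mem_compl.2 hj⟩).1.2
      · intro ht
        obtain ⟨⟨j, hj⟩, hjt⟩ := gh.1.2 ⟨t, ht⟩
        exact ⟨j, by rw [dif_pos hj], by rw [dif_pos hj]; exact congrArg Subtype.val hjt⟩⟩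
  left_inv f := by
    obtain ⟨F, hS, hT⟩ := f
    have hmS : ∀ j, j ∈ S ↔ (F j).1.val = 0 := fun j => by simp [← hS]
    refine Subtype.ext (funext fun i => ?_)
    dsimp only
    by_cases hi : i ∈ S
    · rw [dif_pos hi]
      have h0 : (F i).1.val = 0 := (hmS i).1 hi
      exact Prod.ext (Fin.ext h0.symm) rfl
    · rw [dif_neg hi]
  right_inv gh := by
    refine Prod.ext (Subtype.ext (funext fun i => Subtype.ext ?_)) (funext fun i => ?_)
    · dsimp only
      rw [dif_pos i.2]
    · have hi : (i : Fin N) ∉ S := Finset.mem_compl.1 i.2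
      refine Prod.ext (Subtype.ext ?_) ?_ <;> dsimp only <;> rw [dif_neg hi]

lemma fiber_card (τ η N : ℕ) (S : Finset (Fin N)) (T : Finset (Fin η)) :
    ((univ : Finset (Fin N → Fin (2 ^ τ) × Fin η)).filter (fun f =>
      ((Finset.univ.filter fun i => (f i).1.val = 0),
       ((Finset.univ.filter fun i => (f i).1.val = 0)).image (fun i => (f i).2)) = (S, T))).card
    = FN S.card T.card * ((2 ^ τ - 1) * η) ^ (N - S.card) := by
  simp only [Prod.mk.injEq]
  rw [← Fintype.card_subtype]
  rw [Fintype.card_congr (fiberEquiv τ η N S T)]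
  rw [Fintype.card_prod, card_surj_subtype, Fintype.card_fun, Fintype.card_prod, cardFinNeZero,
    Fintype.card_fin, Fintype.card_coe, Finset.card_compl, Fintype.card_fin]

def cnt (τ η n N : ℕ) : ℕ :=
  ((Finset.univ.filter (fun f : Fin N → Fin (2 ^ τ) × Fin η =>
      n ≤ ((Finset.univ.filter (fun i => (f i).1.val = 0)).image
            (fun i => (f i).2)).card)).card)

lemma count_eq (τ η n N : ℕ) :
    cnt τ η n N
    = ∑ η₁ ∈ Icc n η, ∑ α ∈ Icc η₁ N,
        N.choose α * η.choose η₁ * (FN α η₁ * ((2 ^ τ - 1) * η) ^ (N - α)) := by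
  classical
  rw [cnt, Finset.card_eq_sum_card_fiberwise (f := fun f =>
      ((Finset.univ.filter fun i => (f i).1.val = 0),
       ((Finset.univ.filter fun i => (f i).1.val = 0)).image (fun i => (f i).2)))
    (t := (univ : Finset (Finset (Fin N))) ×ˢ ((univ : Finset (Finset (Fin η))).filter
      (fun T => n ≤ T.card)))
    (fun f hf => by simpa using (Finset.mem_filter.1 hf).2)]
  have hfib : ∀ p ∈ (univ : Finset (Finset (Fin N))) ×ˢ ((univ : Finset (Finset (Fin η))).filter
      (fun T => n ≤ T.card)),
      (((univ : Finset (Fin N → Fin (2 ^ τ) × Fin η)).filter (fun f =>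
        n ≤ ((Finset.univ.filter (fun i => (f i).1.val = 0)).image (fun i => (f i).2)).card)).filter
        (fun f => ((Finset.univ.filter fun i => (f i).1.val = 0),
          ((Finset.univ.filter fun i => (f i).1.val = 0)).image (fun i => (f i).2)) = p)).card
      = FN p.1.card p.2.card * ((2 ^ τ - 1) * η) ^ (N - p.1.card) := by
    rintro ⟨S, T⟩ hp
    have hT : n ≤ T.card := by simpa using (Finset.mem_product.1 hp).2
    rw [Finset.filter_filter]
    rw [Finset.filter_congr (fun f _ => show _ ↔ _ from
      ⟨And.right, fun h => ⟨by simp only [Prod.mk.injEq] at h; rw [h.2]; exact hT, h⟩⟩)]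
    exact fiber_card τ η N S T
  rw [Finset.sum_congr rfl hfib, Finset.sum_product]
  have hIcc : (Finset.range (η+1)).filter (fun k => n ≤ k) = Icc n η := by
    ext k; simp [Nat.lt_succ_iff]; omega
  have step1 : ∀ S : Finset (Fin N),
      (∑ T ∈ ((univ : Finset (Finset (Fin η))).filter fun T => n ≤ T.card),
        FN S.card T.card * ((2 ^ τ - 1) * η) ^ (N - S.card))
      = ∑ η₁ ∈ Icc n η, η.choose η₁ * (FN S.card η₁ * ((2 ^ τ - 1) * η) ^ (N - S.card)) := by
    intro S
    rw [Finset.sum_filter,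
      sum_finset_card (fun k => if n ≤ k then FN S.card k * ((2 ^ τ - 1) * η) ^ (N - S.card) else 0)]
    simp only [smul_eq_mul, mul_ite, mul_zero]
    rw [← Finset.sum_filter, hIcc]
  rw [Finset.sum_congr rfl (fun S _ => step1 S), Finset.sum_comm]
  refine Finset.sum_congr rfl fun η₁ hη₁ => ?_
  rw [sum_finset_card (fun α => η.choose η₁ * (FN α η₁ * ((2 ^ τ - 1) * η) ^ (N - α)))]
  rw [← Finset.sum_subset
    (fun x hx => Finset.mem_range.2 (Nat.lt_succ_of_le (Finset.mem_Icc.1 hx).2))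
    (fun α hα hα' => ?_)]
  · refine Finset.sum_congr rfl fun α _ => ?_
    simp only [smul_eq_mul]; ring
  · have : α < η₁ := by simp only [Finset.mem_range, Finset.mem_Icc] at *; omega
    simp [FN_eq_zero this]

lemma term_eq (τ η η₁ N α : ℕ) (hη : 1 ≤ η) (hα : α ≤ N) :
    (N.choose α : ℚ) * (1 / 2 ^ τ) ^ α * (1 - 1 / 2 ^ τ) ^ (N - α)
      * (η.choose η₁ : ℚ) * (FN α η₁ : ℚ) / (η : ℚ) ^ α
    = (N.choose α * η.choose η₁ * (FN α η₁ * ((2 ^ τ - 1) * η) ^ (N - α)) : ℕ)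
      / ((2 ^ τ * η : ℚ)) ^ N := by
  obtain ⟨k, rfl⟩ : ∃ k, N = α + k := ⟨N - α, (Nat.add_sub_cancel' hα).symm⟩
  have h2 : (2 : ℚ) ^ τ ≠ 0 := by positivity
  have hη' : (η : ℚ) ≠ 0 := by positivity
  have hcast : ((2 ^ τ - 1 : ℕ) : ℚ) = 2 ^ τ - 1 := by
    push_cast [Nat.one_le_two_pow]; ring
  push_cast [hcast]
  rw [Nat.add_sub_cancel_left]
  have : (1 : ℚ) - 1 / 2 ^ τ = (2 ^ τ - 1) / 2 ^ τ := by field_simp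
  rw [this, mul_pow]
  field_simp
  simp only [div_pow, one_pow, mul_pow, pow_add]
  field_simp

lemma main_id (τ η n : ℕ) (hη : 1 ≤ η) (N : ℕ) :
    (cnt τ η n N : ℚ) / ((2 ^ τ * η : ℚ)) ^ N
    = ∑ η₁ ∈ Finset.Icc n η, ∑ α ∈ Finset.Icc η₁ N,
        (N.choose α : ℚ) * (1 / 2 ^ τ) ^ α * (1 - 1 / 2 ^ τ) ^ (N - α)
          * (η.choose η₁ : ℚ) * (FN α η₁ : ℚ) / (η : ℚ) ^ α := by
  rw [Finset.sum_congr rfl (fun η₁ _ => Finset.sum_congr rfl (fun α hα =>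
    term_eq τ η η₁ N α hη (Finset.mem_Icc.1 hα).2))]
  simp only [← Finset.sum_div]
  rw [count_eq τ η n N]
  push_cast
  ring

lemma count_step (τ η n N : ℕ) : cnt τ η n N * (2 ^ τ * η) ≤ cnt τ η n (N + 1) := by
  classical
  have hcard : cnt τ η n N * (2 ^ τ * η)
      = (((Finset.univ.filter (fun f : Fin N → Fin (2 ^ τ) × Fin η =>
          n ≤ ((Finset.univ.filter (fun i => (f i).1.val = 0)).image
                (fun i => (f i).2)).card)) ×ˢ (univ : Finset (Fin (2 ^ τ) × Fin η))).card) := by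
    rw [Finset.card_product, Finset.card_univ, Fintype.card_prod, Fintype.card_fin,
      Fintype.card_fin, cnt]
  rw [hcard, cnt]
  apply Finset.card_le_card_of_injOn (fun p => Fin.snoc p.1 p.2)
  · rintro ⟨f, b⟩ hp
    have hf : n ≤ ((Finset.univ.filter (fun i => (f i).1.val = 0)).image
        (fun i => (f i).2)).card := (Finset.mem_filter.1 (Finset.mem_product.1 hp).1).2
    simp only [Finset.mem_coe, Finset.mem_filter, Finset.mem_univ, true_and]
    refine hf.trans (Finset.card_le_card ?_)
    intro t ht
    obtain ⟨i, hi, rfl⟩ := Finset.mem_image.1 ht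
    have hi0 : (f i).1.val = 0 := by simpa using hi
    refine Finset.mem_image.2 ⟨Fin.castSucc i, ?_, by simp [Fin.snoc_castSucc]⟩
    simp [Fin.snoc_castSucc, hi0]
    exact Fin.ext hi0
  · rintro ⟨f, b⟩ - ⟨f', b'⟩ - h
    simp only [Prod.mk.injEq]
    constructor
    · funext j
      have := congrFun h (Fin.castSucc j)
      simpa [Fin.snoc_castSucc] using this
    · have := congrFun h (Fin.last N)
      simpa [Fin.snoc_last] using this

lemma P_mono (τ η n : ℕ) (hη : 1 ≤ η) :
    Monotone (fun N => (cnt τ η n N : ℚ) / ((2 ^ τ * η : ℚ)) ^ N) := by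
  have hDη : (0:ℚ) < η := by exact_mod_cast hη
  apply monotone_nat_of_le_succ
  intro N
  rw [div_le_div_iff₀ (by positivity) (by positivity)]
  have h' : (cnt τ η n N : ℚ) * (2 ^ τ * η) ≤ (cnt τ η n (N + 1) : ℚ) := by
    exact_mod_cast count_step τ η n N
  calc (cnt τ η n N : ℚ) * (2 ^ τ * η) ^ (N + 1)
      = (cnt τ η n N : ℚ) * (2 ^ τ * η) * (2 ^ τ * η) ^ N := by ring
    _ ≤ (cnt τ η n (N + 1) : ℚ) * (2 ^ τ * η) ^ N := by
        exact mul_le_mul_of_nonneg_right h' (by positivity)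

end Stmt19Aux

/-- Two-stage model: each of `N` elements independently passes an LSB filter with
probability `p = 1/2^τ` (its uniform `Fin (2^τ)` value equals 0) and, if sampled, sets a
uniformly random one of `η` boxes. The probability that at least `n` boxes are non-empty
equals `Σ_{η₁=n}^{η} Σ_{α=η₁}^{N} C(N,α) p^α (1−p)^{N−α} · C(η,η₁) FN(α,η₁)/η^α`, and
this probability is monotonically non-decreasing in `N`. -/
theorem stmt19 (τ η n : ℕ) (hη : 1 ≤ η) (hn : n ≤ η) :
    (∀ N : ℕ,
      ((Finset.univ.filter (fun f : Fin N → Fin (2 ^ τ) × Fin η =>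
          n ≤ ((Finset.univ.filter (fun i => (f i).1.val = 0)).image
                (fun i => (f i).2)).card)).card : ℚ)
          / ((2 ^ τ * η : ℚ)) ^ N
      = ∑ η₁ ∈ Finset.Icc n η, ∑ α ∈ Finset.Icc η₁ N,
          (N.choose α : ℚ) * (1 / 2 ^ τ) ^ α * (1 - 1 / 2 ^ τ) ^ (N - α)
            * (η.choose η₁ : ℚ) * (FN α η₁ : ℚ) / (η : ℚ) ^ α) ∧
    (∀ N M : ℕ, N ≤ M →
      (∑ η₁ ∈ Finset.Icc n η, ∑ α ∈ Finset.Icc η₁ N,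
          (N.choose α : ℚ) * (1 / 2 ^ τ) ^ α * (1 - 1 / 2 ^ τ) ^ (N - α)
            * (η.choose η₁ : ℚ) * (FN α η₁ : ℚ) / (η : ℚ) ^ α)
      ≤ ∑ η₁ ∈ Finset.Icc n η, ∑ α ∈ Finset.Icc η₁ M,
          (M.choose α : ℚ) * (1 / 2 ^ τ) ^ α * (1 - 1 / 2 ^ τ) ^ (M - α)
            * (η.choose η₁ : ℚ) * (FN α η₁ : ℚ) / (η : ℚ) ^ α) := by
  refine ⟨fun N => Stmt19Aux.main_id τ η n hη N, fun N M hNM => ?_⟩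
  rw [← Stmt19Aux.main_id τ η n hη N, ← Stmt19Aux.main_id τ η n hη M]
  exact Stmt19Aux.P_mono τ η n hη hNM
end
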